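/- In the group ring Z_2[G] where G is cyclic of odd order m, the Frobenius-type squaring map is injective on elements: if α = Σ a_i g^i and β = Σ b_i g^i are elements of Z_2[G] with β^2 = α and α^2 = α, then α = β. Consequently, no nontrivial idempotent α of Z_2[G] admits an element β ∉ {0, 1, α} with β^2 = α, i.e., no nontrivial idempotent is a Smarandache idempotent. -/

import Mathlib

theorem stmt_1 (m : ℕ) (hm : Odd m) (hm1 : 1 < m) :
    (∀ α β : MonoidAlgebra (ZMod 2) (Multiplicative (ZMod m)),
      α ^ 2 = α → β ^ 2 = α → α = β) ∧
    (∀ α : MonoidAlgebra (ZMod 2) (Multiplicative (ZMod m)),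
      α ^ 2 = α →
        ¬ ∃ β : MonoidAlgebra (ZMod 2) (Multiplicative (ZMod m)),
          β ≠ 0 ∧ β ≠ 1 ∧ β ≠ α ∧ β ^ 2 = α) := by
  haveI : NeZero m := ⟨by omega⟩
  have hcop : Nat.Coprime 2 m := Nat.coprime_two_left.mpr hm
  set u := ZMod.unitOfCoprime 2 hcop with hu
  have hu2 : (u : ZMod m) = 2 := ZMod.coe_unitOfCoprime 2 hcop
  let f : ZMod m ≃+ ZMod m :=
    { toFun := fun x => 2 * x
      invFun := fun x => (u⁻¹ : (ZMod m)ˣ) * x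
      left_inv := by
        intro x
        show (u⁻¹ : (ZMod m)ˣ) * (2 * x) = x
        rw [← hu2, ← mul_assoc, ← Units.val_mul, inv_mul_cancel, Units.val_one, one_mul]
      right_inv := by
        intro x
        show 2 * ((u⁻¹ : (ZMod m)ˣ) * x) = x
        rw [← hu2, ← mul_assoc, ← Units.val_mul, mul_inv_cancel, Units.val_one, one_mul]
      map_add' := mul_add 2 }
  let e : Multiplicative (ZMod m) ≃* Multiplicative (ZMod m) := AddEquiv.toMultiplicative f
  have he : ∀ g : Multiplicative (ZMod m), e g = g * g := by
    intro g
    show Multiplicative.ofAdd (2 * Multiplicative.toAdd g) = g * g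
    rw [two_mul, ofAdd_add]
    simp
  let A := MonoidAlgebra (ZMod 2) (Multiplicative (ZMod m))
  show (∀ α β : A, α ^ 2 = α → β ^ 2 = α → α = β) ∧
    (∀ α : A, α ^ 2 = α → ¬ ∃ β : A, β ≠ 0 ∧ β ≠ 1 ∧ β ≠ α ∧ β ^ 2 = α)
  set φ := MonoidAlgebra.domCongr (ZMod 2) (ZMod 2) e with hφ
  have h2 : ∀ z : A, z + z = 0 := by
    intro z
    calc z + z = (2 : ZMod 2) • z := (two_smul _ z).symm
      _ = (0 : ZMod 2) • z := by rw [show (2 : ZMod 2) = 0 by decide]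
      _ = 0 := zero_smul _ z
  have hsq : ∀ x y : A, (x + y) ^ 2 = x ^ 2 + y ^ 2 := by
    intro x y
    rw [add_sq]
    have : 2 * x * y = x * y + x * y := by ring
    rw [this, h2 (x * y)]
    ring
  have key : ∀ x : A, x ^ 2 = φ x := by
    have hext : AddMonoidHom.mk' (fun x : A => x ^ 2) hsq
        = AddMonoidHom.mk' (fun x : A => φ x) (map_add φ) := by
      apply MonoidAlgebra.addMonoidHom_ext
      intro g a
      show (MonoidAlgebra.single g a : A) ^ 2 = φ (MonoidAlgebra.single g a)
      rw [MonoidAlgebra.single_pow]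
      have ha2 : a ^ 2 = a := by revert a; decide
      rw [ha2, hφ, MonoidAlgebra.domCongr_single, he, sq]
    intro x
    exact DFunLike.congr_fun hext x
  have inj : Function.Injective φ := φ.injective
  have part1 : ∀ α β : A, α ^ 2 = α → β ^ 2 = α → α = β := by
    intro α β hα hβ
    apply inj
    rw [← key, ← key, hα, hβ]
  refine ⟨part1, ?_⟩
  rintro α hα ⟨β, _, _, hβα, hβ2⟩
  exact hβα (part1 α β hα hβ2).symm
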